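/- If (a_i) is a valid Chung-Graham representation (digits in {0,1,2}, zero at odd indices, between any two even indices with digit 2 there is an even index with digit 0), and (b_i), (c_i) are defined by the split a_i = 0 ↦ (0,0), a_i = 1 ↦ (0,1), a_i = 2 ↦ (1,1), then both (b_i) and (c_i) are valid Zeckendorf representations, i.e., binary sequences with no two consecutive 1's. -/
import Mathlib


/-- The value represented by a finitely supported digit sequence:
    `∑ i, a i * F (i+2)` where `F` is the Fibonacci sequence. -/
def fibVal (a : ℕ →₀ ℕ) : ℕ := a.sum fun i c => c * Nat.fib (i + 2)

/-- Zeckendorf conditions: binary digits with no two consecutive 1's. -/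
def IsZeckendorf (a : ℕ →₀ ℕ) : Prop :=
  (∀ i, a i ≤ 1) ∧ (∀ i, a i * a (i + 1) = 0)

/-- Chung-Graham conditions: digits in {0,1,2}, zero at odd indices, and
    between any two even indices carrying digit 2 there is an even index
    carrying digit 0. -/
def IsChungGraham (a : ℕ →₀ ℕ) : Prop :=
  (∀ i, a i ≤ 2) ∧ (∀ i, Odd i → a i = 0) ∧
  (∀ i j, Even i → Even j → i < j → a i = 2 → a j = 2 →
    ∃ k, Even k ∧ i < k ∧ k < j ∧ a k = 0)

/-- The `cgsplit` rule: digit 0 ↦ (0,0), 1 ↦ (0,1), 2 ↦ (1,1). -/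
def IsSplit (a b c : ℕ →₀ ℕ) : Prop :=
  ∀ i, (a i = 0 → b i = 0 ∧ c i = 0) ∧
       (a i = 1 → b i = 0 ∧ c i = 1) ∧
       (a i = 2 → b i = 1 ∧ c i = 1)

theorem split_of_chung_graham_is_zeckendorf (a b c : ℕ →₀ ℕ)
    (ha : IsChungGraham a) (hsplit : IsSplit a b c) :
    IsZeckendorf b ∧ IsZeckendorf c := by
  obtain ⟨h2, hodd, -⟩ := ha
  have key : ∀ i, b i ≤ 1 ∧ c i ≤ 1 ∧ (a i = 0 → b i = 0 ∧ c i = 0) := by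
    intro i
    obtain ⟨s0, s1, s2⟩ := hsplit i
    have := h2 i
    interval_cases h : a i
    · simp_all
    · simp_all
    · simp_all
  have zero : ∀ i, b i * b (i+1) = 0 ∧ c i * c (i+1) = 0 := by
    intro i
    rcases Nat.even_or_odd i with he | ho
    · have : a (i+1) = 0 := hodd _ (Even.add_one he)
      obtain ⟨hb, hc⟩ := (key (i+1)).2.2 this
      simp [hb, hc]
    · obtain ⟨hb, hc⟩ := (key i).2.2 (hodd i ho)
      simp [hb, hc]
  exact ⟨⟨fun i => (key i).1, fun i => (zero i).1⟩,
         ⟨fun i => (key i).2.1, fun i => (zero i).2⟩⟩
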